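/- arXiv:2104.07323 — 3 statements merged into one kernel-verified Lean document; each statement's English description precedes it below -/
import Mathlib

section
/- Let μ₁, μ₂, c₁, c₂, p₁, p₂ > 0 and w > 0, and define f̄(q₁) = p₁²q₁²/(2μ₁c₁) + (2p₂³μ₂²/(3c₂³))·(w − q₁/μ₁)³. Set A = 2w/μ₁ + p₁²c₂³/(2p₂³c₁μ₂²) and q₁* = (1/2)Aμ₁² − √((1/4)A²μ₁⁴ − μ₁²w²). Then q₁* ∈ [0, μ₁w], the quantity under the square root is nonnegative, and f̄'(q₁*) = 0. -/
set_option maxHeartbeats 1600000 in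
theorem stmt_1 (μ₁ μ₂ c₁ c₂ p₁ p₂ w : ℝ)
    (hμ₁ : 0 < μ₁) (hμ₂ : 0 < μ₂) (hc₁ : 0 < c₁) (hc₂ : 0 < c₂)
    (hp₁ : 0 < p₁) (hp₂ : 0 < p₂) (hw : 0 < w)
    (f : ℝ → ℝ)
    (hf : f = fun q₁ : ℝ => p₁ ^ 2 * q₁ ^ 2 / (2 * μ₁ * c₁)
        + (2 * p₂ ^ 3 * μ₂ ^ 2 / (3 * c₂ ^ 3)) * (w - q₁ / μ₁) ^ 3)
    (A : ℝ) (hA : A = 2 * w / μ₁ + p₁ ^ 2 * c₂ ^ 3 / (2 * p₂ ^ 3 * c₁ * μ₂ ^ 2))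
    (q₁star : ℝ)
    (hq : q₁star = (1 / 2) * A * μ₁ ^ 2
        - Real.sqrt ((1 / 4) * A ^ 2 * μ₁ ^ 4 - μ₁ ^ 2 * w ^ 2)) :
    q₁star ∈ Set.Icc 0 (μ₁ * w) ∧
    0 ≤ (1 / 4) * A ^ 2 * μ₁ ^ 4 - μ₁ ^ 2 * w ^ 2 ∧
    deriv f q₁star = 0 := by
  have hB : 0 < p₁ ^ 2 * c₂ ^ 3 / (2 * p₂ ^ 3 * c₁ * μ₂ ^ 2) := by positivity
  have hAw : 2 * w / μ₁ < A := by rw [hA]; linarith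
  have hAw' : 2 * w ≤ A * μ₁ := by
    have := (div_lt_iff₀ hμ₁).mp hAw
    linarith
  have hD : 0 ≤ (1 / 4) * A ^ 2 * μ₁ ^ 4 - μ₁ ^ 2 * w ^ 2 := by
    have h1 : 0 ≤ (A * μ₁ - 2 * w) * (A * μ₁ + 2 * w) :=
      mul_nonneg (by linarith) (by linarith)
    nlinarith [mul_nonneg (sq_nonneg μ₁) h1]
  obtain ⟨s, hs⟩ : ∃ s, s = Real.sqrt ((1 / 4) * A ^ 2 * μ₁ ^ 4 - μ₁ ^ 2 * w ^ 2) :=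
    ⟨_, rfl⟩
  rw [← hs] at hq
  have hsnn : 0 ≤ s := hs ▸ Real.sqrt_nonneg _
  have hssq : s ^ 2 = (1 / 4) * A ^ 2 * μ₁ ^ 4 - μ₁ ^ 2 * w ^ 2 := hs ▸ Real.sq_sqrt hD
  have hAnn : 0 ≤ (1 / 2) * A * μ₁ ^ 2 := by nlinarith
  have hmem : q₁star ∈ Set.Icc 0 (μ₁ * w) := by
    constructor
    · have hle : s ≤ (1 / 2) * A * μ₁ ^ 2 := by
        rw [hs]
        calc Real.sqrt ((1 / 4) * A ^ 2 * μ₁ ^ 4 - μ₁ ^ 2 * w ^ 2)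
            ≤ Real.sqrt (((1 / 2) * A * μ₁ ^ 2) ^ 2) :=
              Real.sqrt_le_sqrt (by nlinarith [sq_nonneg (μ₁ * w)])
          _ = (1 / 2) * A * μ₁ ^ 2 := Real.sqrt_sq hAnn
      rw [hq]; linarith
    · have ht : 0 ≤ (1 / 2) * A * μ₁ ^ 2 - μ₁ * w := by nlinarith
      have hprod : 0 ≤ ((1 / 2) * A * μ₁ ^ 2 - μ₁ * w) * (2 * (μ₁ * w)) :=
        mul_nonneg ht (by positivity)
      have hid : ((1 / 2) * A * μ₁ ^ 2 - μ₁ * w) ^ 2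
          = (1 / 4) * A ^ 2 * μ₁ ^ 4 - μ₁ ^ 2 * w ^ 2
            - ((1 / 2) * A * μ₁ ^ 2 - μ₁ * w) * (2 * (μ₁ * w)) := by ring
      have hge : (1 / 2) * A * μ₁ ^ 2 - μ₁ * w ≤ s := by
        rw [hs]
        exact Real.le_sqrt_of_sq_le (by linarith)
      rw [hq]; linarith
  refine ⟨hmem, hD, ?_⟩
  have hμ₁' : μ₁ ≠ 0 := ne_of_gt hμ₁
  have hquad : q₁star ^ 2 - A * μ₁ ^ 2 * q₁star + μ₁ ^ 2 * w ^ 2 = 0 := by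
    rw [hq]; linear_combination hssq
  have hkey : (w - q₁star / μ₁) ^ 2
      = p₁ ^ 2 * c₂ ^ 3 / (2 * p₂ ^ 3 * c₁ * μ₂ ^ 2) * q₁star := by
    rw [hA] at hquad
    field_simp at hquad ⊢
    apply mul_left_cancel₀ hμ₁'
    linear_combination μ₁ * hquad
  have hderiv : HasDerivAt f
      (p₁ ^ 2 * (2 * q₁star ^ 1 * 1) / (2 * μ₁ * c₁)
        + (2 * p₂ ^ 3 * μ₂ ^ 2 / (3 * c₂ ^ 3)) *
          (3 * (w - q₁star / μ₁) ^ 2 * (0 - 1 / μ₁))) q₁star := by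
    rw [hf]
    have h1 : HasDerivAt (fun q : ℝ => q) 1 q₁star := hasDerivAt_id _
    have h2 : HasDerivAt (fun q : ℝ => p₁ ^ 2 * q ^ 2 / (2 * μ₁ * c₁))
        (p₁ ^ 2 * (2 * q₁star ^ 1 * 1) / (2 * μ₁ * c₁)) q₁star :=
      ((h1.pow 2).const_mul (p₁ ^ 2)).div_const _
    have h3 : HasDerivAt (fun q : ℝ => w - q / μ₁) (0 - 1 / μ₁) q₁star :=
      (hasDerivAt_const _ w).sub (h1.div_const μ₁)
    exact h2.add ((h3.pow 3).const_mul _)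
  rw [hderiv.deriv, hkey]
  field_simp
  ring
end

section
/- Let μ₁, μ₂, c₁, c₂, p₁, p₂, w > 0 and let q₁* be the point defined by q₁* = (1/2)Aμ₁² − √((1/4)A²μ₁⁴ − μ₁²w²) with A = 2w/μ₁ + p₁²c₂³/(2p₂³c₁μ₂²). Then q₁* is the unique global minimizer of f̄(q₁) = p₁²q₁²/(2μ₁c₁) + (2p₂³μ₂²/(3c₂³))·(w − q₁/μ₁)³ on the interval [0, μ₁w]. -/
set_option maxHeartbeats 1600000 in
theorem stmt_2 (μ₁ μ₂ c₁ c₂ p₁ p₂ w : ℝ)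
    (hμ₁ : 0 < μ₁) (hμ₂ : 0 < μ₂) (hc₁ : 0 < c₁) (hc₂ : 0 < c₂)
    (hp₁ : 0 < p₁) (hp₂ : 0 < p₂) (hw : 0 < w)
    (f : ℝ → ℝ)
    (hf : f = fun q₁ : ℝ => p₁ ^ 2 * q₁ ^ 2 / (2 * μ₁ * c₁)
        + (2 * p₂ ^ 3 * μ₂ ^ 2 / (3 * c₂ ^ 3)) * (w - q₁ / μ₁) ^ 3)
    (A : ℝ) (hA : A = 2 * w / μ₁ + p₁ ^ 2 * c₂ ^ 3 / (2 * p₂ ^ 3 * c₁ * μ₂ ^ 2))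
    (q₁star : ℝ)
    (hq : q₁star = (1 / 2) * A * μ₁ ^ 2
        - Real.sqrt ((1 / 4) * A ^ 2 * μ₁ ^ 4 - μ₁ ^ 2 * w ^ 2)) :
    q₁star ∈ Set.Icc 0 (μ₁ * w) ∧
    (∀ q ∈ Set.Icc 0 (μ₁ * w), f q₁star ≤ f q) ∧
    (∀ q ∈ Set.Icc 0 (μ₁ * w), f q = f q₁star → q = q₁star) := by
  have hμ₁' := hμ₁.ne'
  have hc₁' := hc₁.ne'
  have hc₂' := hc₂.ne'
  have hμ₂' := hμ₂.ne'
  have hp₂' := hp₂.ne'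
  have hm : (0:ℝ) < 2 * p₂ ^ 3 * c₁ * μ₂ ^ 2 := by positivity
  -- cleared form of A
  have hAμ : A * μ₁ * (2 * p₂ ^ 3 * c₁ * μ₂ ^ 2)
      = 4 * p₂ ^ 3 * c₁ * μ₂ ^ 2 * w + p₁ ^ 2 * c₂ ^ 3 * μ₁ := by
    rw [hA]; field_simp; ring
  have hBpos : 2 * w < A * μ₁ := by
    nlinarith [mul_pos (mul_pos (pow_pos hp₁ 2) (pow_pos hc₂ 3)) hμ₁, hm, hAμ]
  have hApos : 2 * w ≤ A * μ₁ := hBpos.le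
  have hA2 : (0:ℝ) ≤ A * μ₁ + 2 * w := by linarith
  have hrad : (0:ℝ) ≤ (1 / 4) * A ^ 2 * μ₁ ^ 4 - μ₁ ^ 2 * w ^ 2 := by
    nlinarith [mul_nonneg (mul_nonneg (sq_nonneg μ₁) (sub_nonneg.mpr hApos)) hA2]
  obtain ⟨s, hsdef⟩ : ∃ s : ℝ,
      s = Real.sqrt ((1 / 4) * A ^ 2 * μ₁ ^ 4 - μ₁ ^ 2 * w ^ 2) := ⟨_, rfl⟩
  rw [← hsdef] at hq
  have hs0 : 0 ≤ s := hsdef ▸ Real.sqrt_nonneg _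
  have hs2 : s ^ 2 = (1 / 4) * A ^ 2 * μ₁ ^ 4 - μ₁ ^ 2 * w ^ 2 :=
    hsdef ▸ Real.sq_sqrt hrad
  -- key quadratic equation satisfied by q₁star
  have key : q₁star ^ 2 - A * μ₁ ^ 2 * q₁star + μ₁ ^ 2 * w ^ 2 = 0 := by
    rw [hq]; linear_combination hs2
  -- A-free cleared version
  have keyc : 2 * p₂ ^ 3 * c₁ * μ₂ ^ 2 * q₁star ^ 2
      - (4 * p₂ ^ 3 * c₁ * μ₂ ^ 2 * μ₁ * w + p₁ ^ 2 * c₂ ^ 3 * μ₁ ^ 2) * q₁star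
      + 2 * p₂ ^ 3 * c₁ * μ₂ ^ 2 * μ₁ ^ 2 * w ^ 2 = 0 := by
    linear_combination (2 * p₂ ^ 3 * c₁ * μ₂ ^ 2) * key + (μ₁ * q₁star) * hAμ
  have hAq : 0 < A * μ₁ ^ 2 := by nlinarith [mul_pos hw hμ₁]
  -- bounds on q₁star
  have hq0 : 0 < q₁star := by
    have hAq2 : 0 < (1 / 2) * A * μ₁ ^ 2 := by linarith
    have hlt : s < (1 / 2) * A * μ₁ ^ 2 := by
      rw [hsdef, Real.sqrt_lt' hAq2]
      nlinarith [mul_pos (mul_pos hμ₁ hμ₁) (mul_pos hw hw)]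
    rw [hq]; linarith
  have hq1 : q₁star < μ₁ * w := by
    have hcm : 0 < (1 / 2) * A * μ₁ ^ 2 - μ₁ * w := by
      nlinarith [mul_pos hμ₁ (sub_pos.mpr hBpos)]
    have hlt : (1 / 2) * A * μ₁ ^ 2 - μ₁ * w < s := by
      rw [hsdef, Real.lt_sqrt hcm.le]
      nlinarith [mul_pos (mul_pos (mul_pos hμ₁ hμ₁) hw) (sub_pos.mpr hBpos)]
    rw [hq]; linarith
  -- polynomial form of f
  have hDpos : (0:ℝ) < 6 * μ₁ ^ 3 * c₁ * c₂ ^ 3 := by positivity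
  have hfq : ∀ q : ℝ, f q = (3 * c₂ ^ 3 * p₁ ^ 2 * μ₁ ^ 2 * q ^ 2
      + 4 * c₁ * p₂ ^ 3 * μ₂ ^ 2 * (μ₁ * w - q) ^ 3) / (6 * μ₁ ^ 3 * c₁ * c₂ ^ 3) := by
    intro q; rw [hf]; field_simp; ring
  have hPdiff : ∀ q : ℝ,
      (3 * c₂ ^ 3 * p₁ ^ 2 * μ₁ ^ 2 * q ^ 2
        + 4 * c₁ * p₂ ^ 3 * μ₂ ^ 2 * (μ₁ * w - q) ^ 3)
      - (3 * c₂ ^ 3 * p₁ ^ 2 * μ₁ ^ 2 * q₁star ^ 2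
        + 4 * c₁ * p₂ ^ 3 * μ₂ ^ 2 * (μ₁ * w - q₁star) ^ 3)
      = (q - q₁star) ^ 2 * (3 * c₂ ^ 3 * p₁ ^ 2 * μ₁ ^ 2
        + 12 * c₁ * p₂ ^ 3 * μ₂ ^ 2 * μ₁ * w
        - 4 * c₁ * p₂ ^ 3 * μ₂ ^ 2 * (q + 2 * q₁star)) := by
    intro q
    linear_combination (-6 * (q - q₁star)) * keyc
  have hGpos : ∀ q : ℝ, q ≤ μ₁ * w →
      0 < 3 * c₂ ^ 3 * p₁ ^ 2 * μ₁ ^ 2 + 12 * c₁ * p₂ ^ 3 * μ₂ ^ 2 * μ₁ * w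
        - 4 * c₁ * p₂ ^ 3 * μ₂ ^ 2 * (q + 2 * q₁star) := by
    intro q hqle
    nlinarith [mul_pos (mul_pos (pow_pos hp₂ 3) hc₁) (pow_pos hμ₂ 2),
      mul_pos (mul_pos (pow_pos hp₁ 2) (pow_pos hc₂ 3)) (pow_pos hμ₁ 2)]
  refine ⟨⟨hq0.le, hq1.le⟩, ?_, ?_⟩
  · intro q hqi
    rw [hfq q, hfq q₁star, div_le_div_iff_of_pos_right hDpos]
    linarith [hPdiff q,
      mul_nonneg (sq_nonneg (q - q₁star)) (hGpos q hqi.2).le]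
  · intro q hqi hfe
    rw [hfq q, hfq q₁star, div_eq_div_iff hDpos.ne' hDpos.ne'] at hfe
    have hPe := mul_right_cancel₀ hDpos.ne' hfe
    have h0 : (q - q₁star) ^ 2 * (3 * c₂ ^ 3 * p₁ ^ 2 * μ₁ ^ 2
        + 12 * c₁ * p₂ ^ 3 * μ₂ ^ 2 * μ₁ * w
        - 4 * c₁ * p₂ ^ 3 * μ₂ ^ 2 * (q + 2 * q₁star)) = 0 := by
      rw [← hPdiff q, hPe]; ring
    have hGp := hGpos q hqi.2
    have hsq : (q - q₁star) ^ 2 = 0 := by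
      rcases mul_eq_zero.mp h0 with h | h
      · exact h
      · exact absurd h hGp.ne'
    have h : q - q₁star = 0 := by
      exact sq_eq_zero_iff.mp hsq
    linarith
end

section
/- Let p₁, p₂, μ₁, μ₂, c₁, c₂, w > 0 and let q* = (q₁*, q₂*) with q₁* as in the explicit formula q₁* = (1/2)Aμ₁² − √((1/4)A²μ₁⁴ − μ₁²w²), A = 2w/μ₁ + p₁²c₂³/(2p₂³c₁μ₂²), and q₂* = μ₂(w − q₁*/μ₁). Then q* is a Nash equilibrium for the constrained dual-cost game: for any q₁ ∈ [0, μ₁w] with corresponding q₂ = μ₂(w − q₁/μ₁), we have C₁(p₁q₁*, c₁) + C₂(p₂q₂*, c₂) ≤ C₁(p₁q₁, c₁) + C₂(p₂q₂, c₂), where C₁(x,c₁) = x²/(2μ₁c₁) and C₂(x,c₂) = 2x³/(3μ₂c₂³). -/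
set_option maxHeartbeats 800000 in
theorem stmt_17 (μ₁ μ₂ c₁ c₂ p₁ p₂ w : ℝ)
    (hμ₁ : 0 < μ₁) (hμ₂ : 0 < μ₂) (hc₁ : 0 < c₁) (hc₂ : 0 < c₂)
    (hp₁ : 0 < p₁) (hp₂ : 0 < p₂) (hw : 0 < w)
    (A : ℝ) (hA : A = 2 * w / μ₁ + p₁ ^ 2 * c₂ ^ 3 / (2 * p₂ ^ 3 * c₁ * μ₂ ^ 2))
    (q₁star q₂star : ℝ)
    (h₁ : q₁star = (1 / 2) * A * μ₁ ^ 2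
        - Real.sqrt ((1 / 4) * A ^ 2 * μ₁ ^ 4 - μ₁ ^ 2 * w ^ 2))
    (h₂ : q₂star = μ₂ * (w - q₁star / μ₁))
    (C₁ C₂ : ℝ → ℝ)
    (hC₁ : C₁ = fun x => x ^ 2 / (2 * μ₁ * c₁))
    (hC₂ : C₂ = fun x => 2 * x ^ 3 / (3 * μ₂ * c₂ ^ 3)) :
    ∀ q₁ ∈ Set.Icc 0 (μ₁ * w), ∀ q₂ : ℝ, q₂ = μ₂ * (w - q₁ / μ₁) →
      C₁ (p₁ * q₁star) + C₂ (p₂ * q₂star) ≤ C₁ (p₁ * q₁) + C₂ (p₂ * q₂) := by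
  intro q₁ hq₁ q₂ hq₂
  obtain ⟨hq₁0, hq₁M⟩ := hq₁
  set D : ℝ := (1 / 4) * A ^ 2 * μ₁ ^ 4 - μ₁ ^ 2 * w ^ 2 with hD
  have hAμ : 2 * w < A * μ₁ := by
    have hk : 0 < p₁ ^ 2 * c₂ ^ 3 / (2 * p₂ ^ 3 * c₁ * μ₂ ^ 2) := by positivity
    have e : A * μ₁ = 2 * w + p₁ ^ 2 * c₂ ^ 3 / (2 * p₂ ^ 3 * c₁ * μ₂ ^ 2) * μ₁ := by
      rw [hA]; field_simp
    rw [e]; nlinarith [mul_pos hk hμ₁]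
  have hApos : 0 < A := by nlinarith
  have hDnn : 0 ≤ D := by
    have h1 : 0 ≤ (A * μ₁ - 2 * w) * (A * μ₁ + 2 * w) := by
      apply mul_nonneg <;> nlinarith
    rw [hD]; nlinarith [sq_nonneg μ₁, mul_nonneg (sq_nonneg μ₁) h1]
  set s : ℝ := Real.sqrt D with hs
  have hsnn : 0 ≤ s := Real.sqrt_nonneg D
  have hs2 : s ^ 2 = D := Real.sq_sqrt hDnn
  have hquad : q₁star ^ 2 - A * μ₁ ^ 2 * q₁star + μ₁ ^ 2 * w ^ 2 = 0 := by
    rw [h₁]; rw [hD] at hs2; nlinarith [hs2]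
  -- 0 ≤ q₁star
  have hsle : s ≤ (1 / 2) * A * μ₁ ^ 2 := by
    have h1 : D ≤ ((1 / 2) * A * μ₁ ^ 2) ^ 2 := by rw [hD]; nlinarith [sq_nonneg (μ₁ * w)]
    calc s ≤ Real.sqrt (((1 / 2) * A * μ₁ ^ 2) ^ 2) := Real.sqrt_le_sqrt h1
    _ = (1 / 2) * A * μ₁ ^ 2 := Real.sqrt_sq (by positivity)
  have hq₁star0 : 0 ≤ q₁star := by rw [h₁]; linarith
  -- q₁star ≤ μ₁ * w
  have hsge : (1 / 2) * A * μ₁ ^ 2 - μ₁ * w ≤ s := by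
    have hx : 0 ≤ (1 / 2) * A * μ₁ ^ 2 - μ₁ * w := by nlinarith [mul_pos hμ₁ hμ₁]
    rw [hs, show (1 / 2) * A * μ₁ ^ 2 - μ₁ * w = Real.sqrt (((1 / 2) * A * μ₁ ^ 2 - μ₁ * w) ^ 2)
      from (Real.sqrt_sq hx).symm]
    apply Real.sqrt_le_sqrt
    rw [hD]
    nlinarith [mul_nonneg (mul_nonneg (mul_nonneg (le_of_lt hμ₁) (le_of_lt hμ₁))
      (mul_nonneg (le_of_lt hμ₁) (le_of_lt hw))) (by linarith : (0:ℝ) ≤ A * μ₁ - 2 * w)]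
  have hq₁starM : q₁star ≤ μ₁ * w := by rw [h₁]; linarith
  -- critical point identity
  have hA' : A * (2 * p₂ ^ 3 * c₁ * μ₂ ^ 2 * μ₁) =
      2 * w * (2 * p₂ ^ 3 * c₁ * μ₂ ^ 2) + p₁ ^ 2 * c₂ ^ 3 * μ₁ := by
    rw [hA]; field_simp
    try exact Or.inl trivial
  have hcrit : 6 * p₁ ^ 2 * c₂ ^ 3 * μ₁ ^ 2 * q₁star
      - 12 * p₂ ^ 3 * μ₂ ^ 2 * c₁ * (μ₁ * w - q₁star) ^ 2 = 0 := by
    linear_combination (-6 * (2 * p₂ ^ 3 * c₁ * μ₂ ^ 2)) * hquad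
      + (-6 * μ₁ * q₁star) * hA'
  set F : ℝ → ℝ := fun q => 3 * p₁ ^ 2 * c₂ ^ 3 * μ₁ ^ 2 * q ^ 2
      + 4 * p₂ ^ 3 * μ₂ ^ 2 * c₁ * (μ₁ * w - q) ^ 3 with hF
  have hfact : F q₁ - F q₁star = (q₁ - q₁star) ^ 2 *
      (3 * p₁ ^ 2 * c₂ ^ 3 * μ₁ ^ 2
        + 4 * p₂ ^ 3 * μ₂ ^ 2 * c₁ * (2 * (μ₁ * w - q₁star) + (μ₁ * w - q₁))) := by
    simp only [hF]
    linear_combination (q₁ - q₁star) * hcrit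
  have hkey : F q₁star ≤ F q₁ := by
    have h1 : 0 ≤ 2 * (μ₁ * w - q₁star) + (μ₁ * w - q₁) := by linarith
    nlinarith [hfact, sq_nonneg (q₁ - q₁star), mul_nonneg (sq_nonneg (q₁ - q₁star))
      (by positivity : (0:ℝ) ≤ 3 * p₁ ^ 2 * c₂ ^ 3 * μ₁ ^ 2
        + 4 * p₂ ^ 3 * μ₂ ^ 2 * c₁ * (2 * (μ₁ * w - q₁star) + (μ₁ * w - q₁)))]
  -- rewrite the costs in terms of F
  have heq : ∀ q : ℝ, C₁ (p₁ * q) + C₂ (p₂ * (μ₂ * (w - q / μ₁)))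
      = F q / (6 * μ₁ ^ 3 * c₁ * c₂ ^ 3) := by
    intro q
    rw [hC₁, hC₂]
    simp only [hF]
    field_simp
    ring
  rw [hq₂, h₂, heq, heq]
  exact (div_le_div_iff_of_pos_right (by positivity)).mpr hkey
end
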